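/- Let R be a ring with unity and b, d ∈ R such that b + d is von Neumann regular. The following are equivalent: (1) b·R + d·R = (b+d)·R and b·R ∩ d·R = 0; (2) R·b + R·d = R·(b+d) and R·b ∩ R·d = 0; (3) b·R ∩ d·R = 0 and R·b ∩ R·d = 0. -/
import Mathlib


theorem jain_prasad {R : Type*} [Ring R] (b d : R)
    (h : ∃ x : R, (b + d) * x * (b + d) = b + d) :
    List.TFAE
      [ ({z : R | ∃ r s : R, z = b * r + d * s} = {z : R | ∃ r : R, z = (b + d) * r} ∧
          {z : R | ∃ r : R, z = b * r} ∩ {z : R | ∃ r : R, z = d * r} = {0}),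
        ({z : R | ∃ r s : R, z = r * b + s * d} = {z : R | ∃ r : R, z = r * (b + d)} ∧
          {z : R | ∃ r : R, z = r * b} ∩ {z : R | ∃ r : R, z = r * d} = {0}),
        ({z : R | ∃ r : R, z = b * r} ∩ {z : R | ∃ r : R, z = d * r} = {0} ∧
          {z : R | ∃ r : R, z = r * b} ∩ {z : R | ∃ r : R, z = r * d} = {0}) ] := by
  obtain ⟨x, hx⟩ := h
  have exp : (b + d) * x * (b + d) - (b + d) = 0 := by rw [hx, sub_self]
  tfae_have 1 → 3 := by
    rintro ⟨hsum, hint⟩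
    refine ⟨hint, ?_⟩
    obtain ⟨t, ht⟩ : b ∈ {z : R | ∃ r : R, z = (b + d) * r} := by
      rw [← hsum]; exact ⟨1, 0, by noncomm_ring⟩
    obtain ⟨u, hu⟩ : d ∈ {z : R | ∃ r : R, z = (b + d) * r} := by
      rw [← hsum]; exact ⟨0, 1, by noncomm_ring⟩
    have hcb : (b + d) * x * b = b := by
      calc (b + d) * x * b = (b + d) * x * ((b + d) * t) := by rw [← ht]
        _ = (b + d) * x * (b + d) * t := by rw [← mul_assoc]
        _ = (b + d) * t := by rw [hx]
        _ = b := ht.symm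
    have hcd : (b + d) * x * d = d := by
      calc (b + d) * x * d = (b + d) * x * ((b + d) * u) := by rw [← hu]
        _ = (b + d) * x * (b + d) * u := by rw [← mul_assoc]
        _ = (b + d) * u := by rw [hx]
        _ = d := hu.symm
    have hdb : d * x * b = 0 := by
      have e1 : d * x * b = b * (1 - x * b) := by
        calc d * x * b = (b + d) * x * b - b * (x * b) := by noncomm_ring
          _ = b * (1 - x * b) := by rw [hcb]; noncomm_ring
      have hm : d * x * b ∈ {z : R | ∃ r : R, z = b * r} ∩ {z : R | ∃ r : R, z = d * r} :=
        ⟨⟨1 - x * b, e1⟩, ⟨x * b, by rw [mul_assoc]⟩⟩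
      rw [hint] at hm
      exact hm
    have hbb : b * x * b = b := by
      have : b * x * b = (b + d) * x * b - d * x * b := by noncomm_ring
      rw [this, hcb, hdb, sub_zero]
    ext z
    simp only [Set.mem_inter_iff, Set.mem_setOf_eq, Set.mem_singleton_iff]
    constructor
    · rintro ⟨⟨r, hr⟩, ⟨s, hs⟩⟩
      have h1 : z * (x * b) = z := by
        rw [hr]
        calc r * b * (x * b) = r * (b * x * b) := by noncomm_ring
          _ = r * b := by rw [hbb]
      have h2 : z * (x * b) = 0 := by
        rw [hs]
        calc s * d * (x * b) = s * (d * x * b) := by noncomm_ring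
          _ = 0 := by rw [hdb, mul_zero]
      rw [← h1, h2]
    · rintro rfl
      exact ⟨⟨0, by simp⟩, ⟨0, by simp⟩⟩
  tfae_have 2 → 3 := by
    rintro ⟨hsum, hint⟩
    refine ⟨?_, hint⟩
    obtain ⟨t, ht⟩ : b ∈ {z : R | ∃ r : R, z = r * (b + d)} := by
      rw [← hsum]; exact ⟨1, 0, by noncomm_ring⟩
    obtain ⟨u, hu⟩ : d ∈ {z : R | ∃ r : R, z = r * (b + d)} := by
      rw [← hsum]; exact ⟨0, 1, by noncomm_ring⟩
    have hbc : b * x * (b + d) = b := by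
      calc b * x * (b + d) = t * (b + d) * x * (b + d) := by rw [← ht]
        _ = t * ((b + d) * x * (b + d)) := by rw [mul_assoc, mul_assoc, ← mul_assoc (b+d)]
        _ = t * (b + d) := by rw [hx]
        _ = b := ht.symm
    have hdc : d * x * (b + d) = d := by
      calc d * x * (b + d) = u * (b + d) * x * (b + d) := by rw [← hu]
        _ = u * ((b + d) * x * (b + d)) := by rw [mul_assoc, mul_assoc, ← mul_assoc (b+d)]
        _ = u * (b + d) := by rw [hx]
        _ = d := hu.symm
    have hbd : b * x * d = 0 := by
      have e1 : b * x * d = (1 - b * x) * b := by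
        calc b * x * d = b * x * (b + d) - (b * x) * b := by noncomm_ring
          _ = (1 - b * x) * b := by rw [hbc]; noncomm_ring
      have hm : b * x * d ∈ {z : R | ∃ r : R, z = r * b} ∩ {z : R | ∃ r : R, z = r * d} :=
        ⟨⟨1 - b * x, e1⟩, ⟨b * x, rfl⟩⟩
      rw [hint] at hm
      exact hm
    have hbb : b * x * b = b := by
      have : b * x * b = b * x * (b + d) - b * x * d := by noncomm_ring
      rw [this, hbc, hbd, sub_zero]
    ext z
    simp only [Set.mem_inter_iff, Set.mem_setOf_eq, Set.mem_singleton_iff]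
    constructor
    · rintro ⟨⟨r, hr⟩, ⟨s, hs⟩⟩
      have h1 : (b * x) * z = z := by
        rw [hr]
        calc b * x * (b * r) = (b * x * b) * r := by noncomm_ring
          _ = b * r := by rw [hbb]
      have h2 : (b * x) * z = 0 := by
        rw [hs]
        calc b * x * (d * s) = (b * x * d) * s := by noncomm_ring
          _ = 0 := by rw [hbd, zero_mul]
      rw [← h1, h2]
    · rintro rfl
      exact ⟨⟨0, by simp⟩, ⟨0, by simp⟩⟩
  tfae_have 3 → 1 := by
    rintro ⟨hR, hL⟩
    refine ⟨?_, hR⟩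
    have hv : (b * x + d * x - 1) * b = (1 - b * x - d * x) * d := by
      calc (b * x + d * x - 1) * b
          = ((b + d) * x * (b + d) - (b + d)) + (1 - b * x - d * x) * d := by noncomm_ring
        _ = (1 - b * x - d * x) * d := by rw [exp, zero_add]
    have hz : (b * x + d * x - 1) * b = 0 := by
      have hm : (b * x + d * x - 1) * b ∈
          {z : R | ∃ r : R, z = r * b} ∩ {z : R | ∃ r : R, z = r * d} :=
        ⟨⟨b * x + d * x - 1, rfl⟩, ⟨1 - b * x - d * x, hv⟩⟩
      rw [hL] at hm
      exact hm
    have hcb : (b + d) * x * b = b := by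
      have : (b + d) * x * b = (b * x + d * x - 1) * b + b := by noncomm_ring
      rw [this, hz, zero_add]
    have hw : (b * x + d * x - 1) * d = (1 - b * x - d * x) * b := by
      calc (b * x + d * x - 1) * d
          = ((b + d) * x * (b + d) - (b + d)) + (1 - b * x - d * x) * b := by noncomm_ring
        _ = (1 - b * x - d * x) * b := by rw [exp, zero_add]
    have hz' : (b * x + d * x - 1) * d = 0 := by
      have hm : (b * x + d * x - 1) * d ∈
          {z : R | ∃ r : R, z = r * b} ∩ {z : R | ∃ r : R, z = r * d} :=
        ⟨⟨1 - b * x - d * x, hw⟩, ⟨b * x + d * x - 1, rfl⟩⟩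
      rw [hL] at hm
      exact hm
    have hcd : (b + d) * x * d = d := by
      have : (b + d) * x * d = (b * x + d * x - 1) * d + d := by noncomm_ring
      rw [this, hz', zero_add]
    ext z
    simp only [Set.mem_setOf_eq]
    constructor
    · rintro ⟨r, s, rfl⟩
      exact ⟨x * b * r + x * d * s, by
        calc b * r + d * s = ((b + d) * x * b) * r + ((b + d) * x * d) * s := by
              rw [hcb, hcd]
          _ = (b + d) * (x * b * r + x * d * s) := by noncomm_ring⟩
    · rintro ⟨r, rfl⟩
      exact ⟨r, r, by noncomm_ring⟩
  tfae_have 3 → 2 := by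
    rintro ⟨hR, hL⟩
    refine ⟨?_, hL⟩
    have hv : b * (x * b + x * d - 1) = d * (1 - x * b - x * d) := by
      calc b * (x * b + x * d - 1)
          = ((b + d) * x * (b + d) - (b + d)) + d * (1 - x * b - x * d) := by noncomm_ring
        _ = d * (1 - x * b - x * d) := by rw [exp, zero_add]
    have hz : b * (x * b + x * d - 1) = 0 := by
      have hm : b * (x * b + x * d - 1) ∈
          {z : R | ∃ r : R, z = b * r} ∩ {z : R | ∃ r : R, z = d * r} :=
        ⟨⟨x * b + x * d - 1, rfl⟩, ⟨1 - x * b - x * d, hv⟩⟩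
      rw [hR] at hm
      exact hm
    have hbc : b * x * (b + d) = b := by
      have : b * x * (b + d) = b * (x * b + x * d - 1) + b := by noncomm_ring
      rw [this, hz, zero_add]
    have hw : d * (x * b + x * d - 1) = b * (1 - x * b - x * d) := by
      calc d * (x * b + x * d - 1)
          = ((b + d) * x * (b + d) - (b + d)) + b * (1 - x * b - x * d) := by noncomm_ring
        _ = b * (1 - x * b - x * d) := by rw [exp, zero_add]
    have hz' : d * (x * b + x * d - 1) = 0 := by
      have hm : d * (x * b + x * d - 1) ∈
          {z : R | ∃ r : R, z = b * r} ∩ {z : R | ∃ r : R, z = d * r} :=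
        ⟨⟨1 - x * b - x * d, hw⟩, ⟨x * b + x * d - 1, rfl⟩⟩
      rw [hR] at hm
      exact hm
    have hdc : d * x * (b + d) = d := by
      have : d * x * (b + d) = d * (x * b + x * d - 1) + d := by noncomm_ring
      rw [this, hz', zero_add]
    ext z
    simp only [Set.mem_setOf_eq]
    constructor
    · rintro ⟨r, s, rfl⟩
      exact ⟨r * (b * x) + s * (d * x), by
        calc r * b + s * d = r * (b * x * (b + d)) + s * (d * x * (b + d)) := by
              rw [hbc, hdc]
          _ = (r * (b * x) + s * (d * x)) * (b + d) := by noncomm_ring⟩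
    · rintro ⟨r, rfl⟩
      exact ⟨r, r, by noncomm_ring⟩
  tfae_finish
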